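/- arXiv:1804.10457 — 2 statements merged into one kernel-verified Lean document; each statement's English description precedes it below -/
import Mathlib

section
/- Let P₁,…,Pₙ be pairwise distinct pure qubit states (rank-one projections on ℂ²) with n ≥ 2. Then P₁,…,Pₙ are antidistinguishable if and only if there exist positive real numbers t₁,…,tₙ such that ∑_{j=1}^n t_j P_j = I. -/
open Matrix BigOperators
open scoped ComplexOrder

/-- A pure qubit state: a rank-one orthogonal projection on ℂ². -/
def IsPureState (P : Matrix (Fin 2) (Fin 2) ℂ) : Prop :=
  P.IsHermitian ∧ P * P = P ∧ P.trace = 1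

/-- A POVM on ℂ² with outcomes 1,…,n. -/
def IsPOVM {n : ℕ} (M : Fin n → Matrix (Fin 2) (Fin 2) ℂ) : Prop :=
  (∀ j, (M j).PosSemidef) ∧ ∑ j, M j = 1

/-- Qubit states are antidistinguishable if some POVM excludes each with certainty,
with every outcome occurring for at least one state. -/
def Antidistinguishable {n : ℕ} (ρ : Fin n → Matrix (Fin 2) (Fin 2) ℂ) : Prop :=
  ∃ M : Fin n → Matrix (Fin 2) (Fin 2) ℂ, IsPOVM M ∧
    ∀ j, (ρ j * M j).trace = 0 ∧ ∑ k, (ρ k * M j).trace ≠ 0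


lemma key_identity (A M : Matrix (Fin 2) (Fin 2) ℂ) :
    A * M * A = (A * M).trace • A - A.det • (M.trace • (1 : Matrix (Fin 2) (Fin 2) ℂ) - M) := by
  ext i j
  fin_cases i <;> fin_cases j <;>
    simp [Matrix.mul_apply, Matrix.trace, Matrix.diag, Fin.sum_univ_two, Matrix.det_fin_two,
      Matrix.one_apply] <;> ring

lemma pure_det {A : Matrix (Fin 2) (Fin 2) ℂ} (h : IsPureState A) : A.det = 0 := by
  have hk := key_identity A 1
  rw [mul_one, h.2.1] at hk
  rw [h.2.2, one_smul] at hk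
  have h2 := sub_eq_self.mp hk.symm
  have h3 := congrArg (fun B : Matrix (Fin 2) (Fin 2) ℂ => B 0 0) h2
  simp [Matrix.trace_one, Matrix.one_apply] at h3
  exact h3.resolve_right (by norm_num)

lemma pure_pinch {A : Matrix (Fin 2) (Fin 2) ℂ} (h : IsPureState A)
    (M : Matrix (Fin 2) (Fin 2) ℂ) : A * M * A = (A * M).trace • A := by
  rw [key_identity, pure_det h, zero_smul, sub_zero]

lemma pure_posSemidef {A : Matrix (Fin 2) (Fin 2) ℂ} (h : IsPureState A) : A.PosSemidef := by
  have : A = Aᴴ * A := by rw [h.1.eq, h.2.1]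
  rw [this]
  exact Matrix.posSemidef_conjTranspose_mul_self A

lemma pure_compl {A : Matrix (Fin 2) (Fin 2) ℂ} (h : IsPureState A) : IsPureState (1 - A) := by
  refine ⟨?_, ?_, ?_⟩
  · have : (1 - A)ᴴ = 1 - Aᴴ := by rw [Matrix.conjTranspose_sub, Matrix.conjTranspose_one]
    rw [Matrix.IsHermitian, this, h.1.eq]
  · simp only [mul_sub, sub_mul, one_mul, mul_one, h.2.1]
    abel
  · rw [Matrix.trace_sub, Matrix.trace_one, h.2.2]
    norm_num

lemma trace_ctms_nonneg (B : Matrix (Fin 2) (Fin 2) ℂ) : 0 ≤ (Bᴴ * B).trace := by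
  rw [Matrix.trace]
  refine Finset.sum_nonneg fun i _ => ?_
  rw [Matrix.diag_apply, Matrix.mul_apply]
  refine Finset.sum_nonneg fun k _ => ?_
  simpa [Matrix.conjTranspose_apply] using star_mul_self_nonneg (B k i)

section
open scoped MatrixOrder

noncomputable def Matrix.PosSemidef.sqrt {A : Matrix (Fin 2) (Fin 2) ℂ} (_hA : A.PosSemidef) :
    Matrix (Fin 2) (Fin 2) ℂ := CFC.sqrt A

lemma Matrix.PosSemidef.sqrt_mul_self {A : Matrix (Fin 2) (Fin 2) ℂ} (hA : A.PosSemidef) :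
    hA.sqrt * hA.sqrt = A := CFC.sqrt_mul_sqrt_self A hA.nonneg

lemma Matrix.PosSemidef.posSemidef_sqrt {A : Matrix (Fin 2) (Fin 2) ℂ} (hA : A.PosSemidef) :
    hA.sqrt.PosSemidef := (CFC.sqrt_nonneg A).posSemidef

end

lemma psd_trace_mul_nonneg {A B : Matrix (Fin 2) (Fin 2) ℂ} (hA : A.PosSemidef)
    (hB : B.PosSemidef) : 0 ≤ (A * B).trace := by
  have h1 : A * B = hA.sqrt * hA.sqrt * (hB.sqrt * hB.sqrt) := by
    rw [hA.sqrt_mul_self, hB.sqrt_mul_self]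
  have h2 : ((hA.sqrt * hB.sqrt)ᴴ * (hA.sqrt * hB.sqrt)).trace = (A * B).trace := by
    rw [Matrix.conjTranspose_mul, hA.posSemidef_sqrt.isHermitian.eq,
      hB.posSemidef_sqrt.isHermitian.eq, h1]
    rw [Matrix.mul_assoc hB.sqrt hA.sqrt, Matrix.trace_mul_comm hB.sqrt, ← Matrix.mul_assoc,
      ← Matrix.mul_assoc, Matrix.mul_assoc (hA.sqrt * hA.sqrt)]
  rw [← h2]
  exact trace_ctms_nonneg _

lemma psd_trace_nonneg {A : Matrix (Fin 2) (Fin 2) ℂ} (hA : A.PosSemidef) : 0 ≤ A.trace := by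
  have := psd_trace_mul_nonneg hA (Matrix.PosSemidef.one (n := Fin 2) (R := ℂ))
  simpa using this

lemma mul_eq_zero_of_trace_zero {A M : Matrix (Fin 2) (Fin 2) ℂ} (hM : M.PosSemidef)
    (hA : IsPureState A) (h : (A * M).trace = 0) : A * M = 0 ∧ M * A = 0 := by
  have hp : A * M * A = 0 := by rw [pure_pinch hA M, h, zero_smul]
  have hsq : M = hM.sqrt * hM.sqrt := hM.sqrt_mul_self.symm
  have hkey : (hM.sqrt * A)ᴴ * (hM.sqrt * A) = 0 := by
    rw [Matrix.conjTranspose_mul, hM.posSemidef_sqrt.isHermitian.eq, hA.1.eq]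
    calc A * hM.sqrt * (hM.sqrt * A) = A * (hM.sqrt * hM.sqrt) * A := by
          rw [Matrix.mul_assoc, Matrix.mul_assoc, Matrix.mul_assoc]
      _ = A * M * A := by rw [← hsq]
      _ = 0 := hp
  have hz : hM.sqrt * A = 0 := Matrix.conjTranspose_mul_self_eq_zero.mp hkey
  have hMA : M * A = 0 := by rw [hsq, Matrix.mul_assoc, hz, Matrix.mul_zero]
  refine ⟨?_, hMA⟩
  have : (M * A)ᴴ = A * M := by rw [Matrix.conjTranspose_mul, hM.isHermitian.eq, hA.1.eq]
  rw [← this, hMA, Matrix.conjTranspose_zero]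

lemma psd_eq_smul_compl {A M : Matrix (Fin 2) (Fin 2) ℂ} (hM : M.PosSemidef)
    (hA : IsPureState A) (h : (A * M).trace = 0) : M = M.trace • (1 - A) := by
  obtain ⟨h1, h2⟩ := mul_eq_zero_of_trace_zero hM hA h
  have hM' : (1 - A) * M * (1 - A) = M := by
    rw [sub_mul, one_mul, h1, sub_zero, mul_sub, mul_one, h2, sub_zero]
  have hp := pure_pinch (pure_compl hA) M
  rw [hM'] at hp
  rw [sub_mul, one_mul, h1, sub_zero] at hp
  exact hp

lemma pure_eq_of_trace_compl_zero {A Q : Matrix (Fin 2) (Fin 2) ℂ} (hA : IsPureState A)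
    (hQ : IsPureState Q) (h : (A * (1 - Q)).trace = 0) : A = Q := by
  obtain ⟨h1, h2⟩ := mul_eq_zero_of_trace_zero (pure_posSemidef (pure_compl hQ)) hA h
  -- h1 : A * (1 - Q) = 0, so A = A * Q ; h2 : (1 - Q) * A = 0, so A = Q * A
  have hAQ : A = A * Q := by
    have := h1; rwa [mul_sub, mul_one, sub_eq_zero] at this
  have hQA : Q * A = A := by
    have := h2; rwa [sub_mul, one_mul, sub_eq_zero, eq_comm] at this
  have htr : (Q * (1 - A)).trace = 0 := by
    rw [mul_sub, mul_one, Matrix.trace_sub, hQ.2.2]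
    have : (Q * A).trace = (1 : ℂ) := by rw [hQA, hA.2.2]
    rw [this, sub_self]
  obtain ⟨h3, _⟩ := mul_eq_zero_of_trace_zero (pure_posSemidef (pure_compl hA)) hQ htr
  have hQ2 : Q = Q * A := by
    have := h3; rwa [mul_sub, mul_one, sub_eq_zero] at this
  rw [← hQA, ← hQ2]

lemma psd_real_smul {A : Matrix (Fin 2) (Fin 2) ℂ} (hA : A.PosSemidef) {c : ℝ} (hc : 0 ≤ c) :
    ((c : ℂ) • A).PosSemidef := by
  constructor
  · rw [Matrix.IsHermitian, Matrix.conjTranspose_smul, hA.isHermitian.eq]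
    congr 1
    simp [Complex.star_def, Complex.conj_ofReal]
  · exact (hA.smul (Complex.zero_le_real.mpr hc)).2

/-- pairwise distinct pure qubit states (n ≥ 2) are
antidistinguishable iff ∑ t_j P_j = I for some positive reals t_j. -/
theorem qubit_antidistinguishable_iff {n : ℕ} (hn : 2 ≤ n)
    (P : Fin n → Matrix (Fin 2) (Fin 2) ℂ) (hP : ∀ j, IsPureState (P j))
    (hinj : Function.Injective P) :
    Antidistinguishable P ↔
      ∃ t : Fin n → ℝ, (∀ j, 0 < t j) ∧ ∑ j, (t j : ℂ) • P j = 1 := by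
  unfold Antidistinguishable IsPOVM
  constructor
  · rintro ⟨M, ⟨hpsd, hsum⟩, hprop⟩
    have hMj : ∀ j, M j = (M j).trace • (1 - P j) :=
      fun j => psd_eq_smul_compl (hpsd j) (hP j) (hprop j).1
    have htr0 : ∀ j, 0 ≤ (M j).trace := fun j => psd_trace_nonneg (hpsd j)
    have hre : ∀ j, (((M j).trace.re : ℝ) : ℂ) = (M j).trace := by
      intro j
      have h := Complex.le_def.mp (htr0 j)
      exact Complex.ext (by simp) (by simpa using h.2)
    have hsum_tr : ∑ j, (M j).trace = 2 := by
      have h := congrArg Matrix.trace hsum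
      rw [Matrix.trace_sum, Matrix.trace_one, Fintype.card_fin] at h
      exact_mod_cast h
    refine ⟨fun j => ((M j).trace).re, fun j => ?_, ?_⟩
    · have hnn : 0 ≤ ((M j).trace).re := by simpa using (Complex.le_def.mp (htr0 j)).1
      refine hnn.lt_of_ne (Ne.symm fun h0 => ?_)
      have htr : (M j).trace = 0 := by rw [← hre j, h0, Complex.ofReal_zero]
      have hM0 : M j = 0 := by rw [hMj j, htr, zero_smul]
      exact (hprop j).2 (by simp [hM0])
    · calc ∑ j, ((((M j).trace).re : ℝ) : ℂ) • P j
          = ∑ j, (M j).trace • P j := Finset.sum_congr rfl fun j _ => by rw [hre j]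
        _ = ∑ j, ((M j).trace • (1 : Matrix (Fin 2) (Fin 2) ℂ) - (M j).trace • (1 - P j)) :=
            Finset.sum_congr rfl fun j _ => by rw [← smul_sub, sub_sub_cancel]
        _ = (∑ j, (M j).trace) • (1 : Matrix (Fin 2) (Fin 2) ℂ) - ∑ j, M j := by
            rw [Finset.sum_sub_distrib, ← Finset.sum_smul]
            congr 1
            exact Finset.sum_congr rfl fun j _ => (hMj j).symm
        _ = (2 : ℂ) • (1 : Matrix (Fin 2) (Fin 2) ℂ) - 1 := by rw [hsum_tr, hsum]
        _ = 1 := by rw [two_smul]; abel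
  · rintro ⟨t, htpos, hsum⟩
    have hsum_tr : ∑ j, (t j : ℂ) = 2 := by
      have h := congrArg Matrix.trace hsum
      rw [Matrix.trace_sum, Matrix.trace_one, Fintype.card_fin] at h
      have h2 : ∑ j, ((t j : ℂ) • P j).trace = ∑ j, (t j : ℂ) :=
        Finset.sum_congr rfl fun j _ => by
          rw [Matrix.trace_smul, (hP j).2.2, smul_eq_mul, mul_one]
      rw [h2] at h
      exact_mod_cast h
    refine ⟨fun j => (t j : ℂ) • (1 - P j),
      ⟨fun j => psd_real_smul (pure_posSemidef (pure_compl (hP j))) (htpos j).le, ?_⟩,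
      fun j => ⟨?_, ?_⟩⟩
    · calc ∑ j, (t j : ℂ) • (1 - P j)
          = (∑ j, (t j : ℂ)) • (1 : Matrix (Fin 2) (Fin 2) ℂ) - ∑ j, (t j : ℂ) • P j := by
            simp only [smul_sub]
            rw [Finset.sum_sub_distrib, ← Finset.sum_smul]
        _ = (2 : ℂ) • (1 : Matrix (Fin 2) (Fin 2) ℂ) - 1 := by rw [hsum_tr, hsum]
        _ = 1 := by rw [two_smul]; abel
    · have h0 : P j * ((t j : ℂ) • (1 - P j)) = 0 := by
        rw [Matrix.mul_smul, mul_sub, mul_one, (hP j).2.1, sub_self, smul_zero]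
      rw [h0, Matrix.trace_zero]
    · have hterm : ∀ k, (P k * ((t j : ℂ) • (1 - P j))).trace
          = (t j : ℂ) * (P k * (1 - P j)).trace := fun k => by
        rw [Matrix.mul_smul, Matrix.trace_smul, smul_eq_mul]
      have hnn : ∀ k, 0 ≤ (P k * (1 - P j)).trace := fun k =>
        psd_trace_mul_nonneg (pure_posSemidef (hP k)) (pure_posSemidef (pure_compl (hP j)))
      haveI : Nontrivial (Fin n) := ⟨⟨⟨0, by omega⟩, ⟨1, by omega⟩, by simp [Fin.ext_iff]⟩⟩
      obtain ⟨k, hk⟩ := exists_ne j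
      have hkpos : 0 < (P k * (1 - P j)).trace := by
        refine (hnn k).lt_of_ne (Ne.symm fun h0 => ?_)
        exact hk (hinj (pure_eq_of_trace_compl_zero (hP k) (hP j) h0))
      have heq : ∑ k, (P k * ((t j : ℂ) • (1 - P j))).trace
          = ∑ k, (t j : ℂ) * (P k * (1 - P j)).trace :=
        Finset.sum_congr rfl fun k _ => hterm k
      rw [heq]
      have hpos : 0 < ∑ k, (t j : ℂ) * (P k * (1 - P j)).trace := by
        refine Finset.sum_pos'
          (fun i _ => mul_nonneg (Complex.zero_le_real.mpr (htpos j).le) (hnn i))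
          ⟨k, Finset.mem_univ k, mul_pos (Complex.zero_lt_real.mpr (htpos j)) hkpos⟩
      exact hpos.ne'
end

section
/- Let r₁,…,rₙ be pairwise distinct unit vectors in ℝ³ (n ≥ 2), and for each j let P_j = (1/2)(I + r_j·σ) be the corresponding pure qubit state, where r·σ = r_x σ_x + r_y σ_y + r_z σ_z with σ_x, σ_y, σ_z the Pauli matrices. Then P₁,…,Pₙ are antidistinguishable if and only if there exist positive real numbers t₁,…,tₙ such that ∑_{j=1}^n t_j r_j = 0. -/
open Matrix BigOperators
open scoped ComplexOrder

/-- The Pauli matrices. -/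
def pauliX : Matrix (Fin 2) (Fin 2) ℂ := !![0, 1; 1, 0]
def pauliY : Matrix (Fin 2) (Fin 2) ℂ := !![0, -Complex.I; Complex.I, 0]
def pauliZ : Matrix (Fin 2) (Fin 2) ℂ := !![1, 0; 0, -1]

/-- The pure qubit state with Bloch vector r, namely (1/2)(I + r·σ). -/
noncomputable def blochState (r : Fin 3 → ℝ) : Matrix (Fin 2) (Fin 2) ℂ :=
  (1 / 2 : ℂ) • (1 + (r 0 : ℂ) • pauliX + (r 1 : ℂ) • pauliY + (r 2 : ℂ) • pauliZ)

lemma blochState_eq (v : Fin 3 → ℝ) : blochState v =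
    !![(1 + (v 2:ℂ))/2, ((v 0:ℂ) - (v 1:ℂ)*Complex.I)/2;
       ((v 0:ℂ) + (v 1:ℂ)*Complex.I)/2, (1 - (v 2:ℂ))/2] := by
  ext i j
  fin_cases i <;> fin_cases j <;>
    simp [blochState, pauliX, pauliY, pauliZ, Matrix.one_apply] <;> ring

lemma trace_bloch_mul (a b : Fin 3 → ℝ) :
    (blochState a * blochState b).trace =
      (((1 + (a 0 * b 0 + a 1 * b 1 + a 2 * b 2)) / 2 : ℝ) : ℂ) := by
  rw [blochState_eq, blochState_eq]
  simp [Matrix.trace_fin_two, Matrix.mul_apply, Fin.sum_univ_succ]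
  ring_nf
  rw [Complex.I_sq]
  ring

lemma bloch_herm (v : Fin 3 → ℝ) : (blochState v).IsHermitian := by
  rw [blochState_eq]
  ext i j
  fin_cases i <;> fin_cases j <;>
    simp [Matrix.conjTranspose_apply, Complex.ext_iff]

lemma bloch_idem (v : Fin 3 → ℝ) (hv : v 0 ^ 2 + v 1 ^ 2 + v 2 ^ 2 = 1) :
    blochState v * blochState v = blochState v := by
  have hv' : (v 0 : ℂ) ^ 2 + (v 1 : ℂ) ^ 2 + (v 2 : ℂ) ^ 2 = 1 := by
    exact_mod_cast hv
  rw [blochState_eq]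
  ext i j
  fin_cases i <;> fin_cases j
  · simp [Matrix.mul_apply, Fin.sum_univ_succ]
    linear_combination (1/4 : ℂ) * hv' - ((v 1:ℂ)^2/4) * Complex.I_sq
  · simp [Matrix.mul_apply, Fin.sum_univ_succ]
    ring
  · simp [Matrix.mul_apply, Fin.sum_univ_succ]
    ring
  · simp [Matrix.mul_apply, Fin.sum_univ_succ]
    linear_combination (1/4 : ℂ) * hv' - ((v 1:ℂ)^2/4) * Complex.I_sq

lemma bloch_psd (v : Fin 3 → ℝ) (hv : v 0 ^ 2 + v 1 ^ 2 + v 2 ^ 2 = 1) :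
    (blochState v).PosSemidef := by
  have h : blochState v = (blochState v)ᴴ * blochState v := by
    rw [bloch_herm v, bloch_idem v hv]
  rw [h]
  exact posSemidef_conjTranspose_mul_self _

lemma bloch_neg (v : Fin 3 → ℝ) : blochState (-v) = 1 - blochState v := by
  rw [blochState_eq, blochState_eq]
  ext i j
  fin_cases i <;> fin_cases j <;>
    simp [Matrix.one_apply, Pi.neg_apply] <;> ring

lemma smul_psd (c : ℝ) (hc : 0 ≤ c) {A : Matrix (Fin 2) (Fin 2) ℂ} (hA : A.PosSemidef) :
    ((c : ℂ) • A).PosSemidef := by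
  refine ⟨?_, fun x => ?_⟩
  · have : ((c : ℂ) • A)ᴴ = (starRingEnd ℂ) (c : ℂ) • Aᴴ := conjTranspose_smul _ _
    rw [Matrix.IsHermitian, this, hA.1, Complex.conj_ofReal]
  · exact (hA.smul (by exact_mod_cast hc : (0:ℂ) ≤ c)).2 x

lemma bloch_sandwich (v : Fin 3 → ℝ) (hv : v 0 ^ 2 + v 1 ^ 2 + v 2 ^ 2 = 1)
    (M : Matrix (Fin 2) (Fin 2) ℂ) :
    blochState v * M * blochState v = (blochState v * M).trace • blochState v := by
  have hv' : (v 0 : ℂ) ^ 2 + (v 1 : ℂ) ^ 2 + (v 2 : ℂ) ^ 2 = 1 := by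
    exact_mod_cast hv
  rw [blochState_eq]
  ext i j
  fin_cases i <;> fin_cases j
  · simp [Matrix.mul_apply, Fin.sum_univ_succ, Matrix.trace_fin_two, Matrix.vecMul, dotProduct]
    linear_combination (M 1 1 / 4 : ℂ) * hv' - (M 1 1 * (v 1:ℂ)^2/4) * Complex.I_sq
  · simp [Matrix.mul_apply, Fin.sum_univ_succ, Matrix.trace_fin_two, Matrix.vecMul, dotProduct]
    linear_combination (-(M 0 1) / 4 : ℂ) * hv' + (M 0 1 * (v 1:ℂ)^2/4) * Complex.I_sq
  · simp [Matrix.mul_apply, Fin.sum_univ_succ, Matrix.trace_fin_two, Matrix.vecMul, dotProduct]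
    linear_combination (-(M 1 0) / 4 : ℂ) * hv' + (M 1 0 * (v 1:ℂ)^2/4) * Complex.I_sq
  · simp [Matrix.mul_apply, Fin.sum_univ_succ, Matrix.trace_fin_two, Matrix.vecMul, dotProduct]
    linear_combination (M 0 0 / 4 : ℂ) * hv' - (M 0 0 * (v 1:ℂ)^2/4) * Complex.I_sq

lemma trace_conj_mul_self_zero {A : Matrix (Fin 2) (Fin 2) ℂ}
    (h : (Aᴴ * A).trace = 0) : A = 0 := by
  have h2 : ((Complex.normSq (A 0 0) + Complex.normSq (A 1 0)
      + (Complex.normSq (A 0 1) + Complex.normSq (A 1 1)) : ℝ) : ℂ) = 0 := by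
    rw [← h]
    simp [Matrix.trace_fin_two, Matrix.mul_apply, Fin.sum_univ_succ,
      Matrix.conjTranspose_apply, Complex.normSq_eq_conj_mul_self]
  rw [Complex.ofReal_eq_zero] at h2
  have h00 := Complex.normSq_nonneg (A 0 0)
  have h10 := Complex.normSq_nonneg (A 1 0)
  have h01 := Complex.normSq_nonneg (A 0 1)
  have h11 := Complex.normSq_nonneg (A 1 1)
  ext i j
  fin_cases i <;> fin_cases j <;>
    simp <;> rw [← Complex.normSq_eq_zero] <;> linarith

open scoped MatrixOrder in
lemma proj_mul_psd_zero {P M : Matrix (Fin 2) (Fin 2) ℂ} (hP : P.IsHermitian)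
    (hPi : P * P = P) (hM : M.PosSemidef) (h : (P * M).trace = 0) :
    P * M = 0 ∧ M * P = 0 := by
  set S := CFC.sqrt M with hSdef
  have hS : S * S = M := CFC.sqrt_mul_sqrt_self M hM.nonneg
  have hSh : Sᴴ = S := (CFC.sqrt_nonneg M).posSemidef.1
  have key : ((S * P)ᴴ * (S * P)).trace = 0 := by
    have : (S * P)ᴴ * (S * P) = P * M * P := by
      rw [conjTranspose_mul, hSh, hP]
      rw [Matrix.mul_assoc, ← Matrix.mul_assoc S S P, hS, ← Matrix.mul_assoc]
    rw [this, Matrix.trace_mul_cycle, hPi, h]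
  have hSP : S * P = 0 := trace_conj_mul_self_zero key
  have hMP : M * P = 0 := by
    rw [← hS, Matrix.mul_assoc, hSP, Matrix.mul_zero]
  refine ⟨?_, hMP⟩
  have : (P * M)ᴴ = M * P := by rw [conjTranspose_mul, hP, hM.1]
  calc P * M = ((P * M)ᴴ)ᴴ := by rw [conjTranspose_conjTranspose]
    _ = 0 := by rw [this, hMP, conjTranspose_zero]

lemma neg_unit {v : Fin 3 → ℝ} (hv : v 0 ^ 2 + v 1 ^ 2 + v 2 ^ 2 = 1) :
    (-v) 0 ^ 2 + (-v) 1 ^ 2 + (-v) 2 ^ 2 = 1 := by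
  simpa using hv

lemma psd_traceZero_struct (v : Fin 3 → ℝ) (hv : v 0 ^ 2 + v 1 ^ 2 + v 2 ^ 2 = 1)
    {M : Matrix (Fin 2) (Fin 2) ℂ} (hM : M.PosSemidef)
    (h : (blochState v * M).trace = 0) :
    M = M.trace • (1 - blochState v) := by
  obtain ⟨hPM, hMP⟩ := proj_mul_psd_zero (bloch_herm v) (bloch_idem v hv) hM h
  have hQ : (1 : Matrix (Fin 2) (Fin 2) ℂ) - blochState v = blochState (-v) :=
    (bloch_neg v).symm
  have hMQ : M = blochState (-v) * M * blochState (-v) := by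
    rw [← hQ]
    rw [Matrix.sub_mul, Matrix.one_mul, Matrix.mul_sub, Matrix.mul_one, hPM]
    rw [Matrix.sub_mul, hMP, Matrix.zero_mul]
    simp
  have hsand := bloch_sandwich (-v) (neg_unit hv) M
  have htr : (blochState (-v) * M).trace = M.trace := by
    rw [← hQ, Matrix.sub_mul, Matrix.one_mul, trace_sub, hPM]
    simp
  calc M = blochState (-v) * M * blochState (-v) := hMQ
    _ = (blochState (-v) * M).trace • blochState (-v) := hsand
    _ = M.trace • (1 - blochState v) := by rw [htr, ← hQ]

lemma psd_diag_nonneg {M : Matrix (Fin 2) (Fin 2) ℂ} (hM : M.PosSemidef) (i : Fin 2) :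
    0 ≤ M i i := by
  exact hM.diag_nonneg

lemma psd_trace_nonneg_s18 {M : Matrix (Fin 2) (Fin 2) ℂ} (hM : M.PosSemidef) :
    0 ≤ M.trace := by
  rw [Matrix.trace_fin_two]
  exact add_nonneg (psd_diag_nonneg hM 0) (psd_diag_nonneg hM 1)

lemma blochState_neg_eq (v : Fin 3 → ℝ) : blochState (-v) =
    !![(1 - (v 2:ℂ))/2, (-(v 0:ℂ) + (v 1:ℂ)*Complex.I)/2;
       (-(v 0:ℂ) - (v 1:ℂ)*Complex.I)/2, (1 + (v 2:ℂ))/2] := by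
  rw [blochState_eq]
  ext i j
  fin_cases i <;> fin_cases j <;> simp [Pi.neg_apply] <;> ring

lemma sum_ofReal_add_mul_I {n : ℕ} (a b : Fin n → ℝ) :
    ∑ j, (((a j : ℝ):ℂ) + ((b j : ℝ):ℂ) * Complex.I)
      = ((∑ j, a j : ℝ):ℂ) + ((∑ j, b j : ℝ):ℂ) * Complex.I := by
  rw [Finset.sum_add_distrib, ← Complex.ofReal_sum, ← Finset.sum_mul, ← Complex.ofReal_sum]

lemma dot_le_one {a b : Fin 3 → ℝ} (ha : a 0 ^ 2 + a 1 ^ 2 + a 2 ^ 2 = 1)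
    (hb : b 0 ^ 2 + b 1 ^ 2 + b 2 ^ 2 = 1) :
    a 0 * b 0 + a 1 * b 1 + a 2 * b 2 ≤ 1 := by
  nlinarith [sq_nonneg (a 0 - b 0), sq_nonneg (a 1 - b 1), sq_nonneg (a 2 - b 2)]

lemma dot_lt_one {a b : Fin 3 → ℝ} (ha : a 0 ^ 2 + a 1 ^ 2 + a 2 ^ 2 = 1)
    (hb : b 0 ^ 2 + b 1 ^ 2 + b 2 ^ 2 = 1) (hab : a ≠ b) :
    a 0 * b 0 + a 1 * b 1 + a 2 * b 2 < 1 := by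
  rcases lt_or_eq_of_le (dot_le_one ha hb) with h | h
  · exact h
  · exfalso
    apply hab
    have e0 : (a 0 - b 0) ^ 2 = 0 := by
      nlinarith [sq_nonneg (a 0 - b 0), sq_nonneg (a 1 - b 1), sq_nonneg (a 2 - b 2)]
    have e1 : (a 1 - b 1) ^ 2 = 0 := by
      nlinarith [sq_nonneg (a 0 - b 0), sq_nonneg (a 1 - b 1), sq_nonneg (a 2 - b 2)]
    have e2 : (a 2 - b 2) ^ 2 = 0 := by
      nlinarith [sq_nonneg (a 0 - b 0), sq_nonneg (a 1 - b 1), sq_nonneg (a 2 - b 2)]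
    have f0 : a 0 = b 0 := sub_eq_zero.1 (pow_eq_zero_iff two_ne_zero |>.1 e0)
    have f1 : a 1 = b 1 := sub_eq_zero.1 (pow_eq_zero_iff two_ne_zero |>.1 e1)
    have f2 : a 2 = b 2 := sub_eq_zero.1 (pow_eq_zero_iff two_ne_zero |>.1 e2)
    funext i
    fin_cases i <;> assumption

/-- the pure qubit states with pairwise distinct unit Bloch vectors
r₁,…,rₙ (n ≥ 2) are antidistinguishable iff ∑ t_j r_j = 0 for some positive reals t_j. -/
theorem bloch_antidistinguishable_iff {n : ℕ} (hn : 2 ≤ n)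
    (r : Fin n → (Fin 3 → ℝ)) (hunit : ∀ j, (r j 0) ^ 2 + (r j 1) ^ 2 + (r j 2) ^ 2 = 1)
    (hinj : Function.Injective r) :
    Antidistinguishable (fun j => blochState (r j)) ↔
      ∃ t : Fin n → ℝ, (∀ j, 0 < t j) ∧ ∑ j, t j • r j = 0 := by
  constructor
  · intro h
    obtain ⟨M, ⟨hpsd, hsum⟩, hcond⟩ := h
    have hstruct : ∀ j, M j = (M j).trace • blochState (-(r j)) := by
      intro j
      have h0 : (blochState (r j) * M j).trace = 0 := by
        have := (hcond j).1; simpa using this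
      rw [bloch_neg]
      exact psd_traceZero_struct (r j) (hunit j) (hpsd j) h0
    set t : Fin n → ℝ := fun j => ((M j).trace).re with ht
    have htr : ∀ j, (M j).trace = ((t j : ℝ) : ℂ) := by
      intro j
      have hnn := psd_trace_nonneg_s18 (hpsd j)
      rw [Complex.nonneg_iff] at hnn
      exact Complex.ext (by simp [ht]) (by simp [ht, ← hnn.2])
    have hpos : ∀ j, 0 < t j := by
      intro j
      have hnn := psd_trace_nonneg_s18 (hpsd j)
      rw [Complex.nonneg_iff] at hnn
      rcases hnn.1.lt_or_eq with hlt | heq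
      · exact hlt
      · exfalso
        have hz : t j = 0 := heq.symm
        have hM0 : M j = 0 := by
          rw [hstruct j, htr j, hz]
          simp
        apply (hcond j).2
        refine Finset.sum_eq_zero fun k _ => ?_
        rw [hM0]
        simp
    refine ⟨t, hpos, ?_⟩
    have hentry : ∀ a b : Fin 2, ∑ j, ((t j : ℝ):ℂ) * blochState (-(r j)) a b
        = (1 : Matrix (Fin 2) (Fin 2) ℂ) a b := by
      intro a b
      calc ∑ j, ((t j : ℝ):ℂ) * blochState (-(r j)) a b = (∑ j, M j) a b := by
            rw [Matrix.sum_apply]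
            refine Finset.sum_congr rfl fun j _ => ?_
            rw [hstruct j, htr j]
            rfl
        _ = (1 : Matrix (Fin 2) (Fin 2) ℂ) a b := by rw [hsum]
    have h01 := hentry 0 1
    have hterm01 : ∀ j ∈ Finset.univ, ((t j : ℝ):ℂ) * blochState (-(r j)) 0 1
        = ((-(t j * r j 0) / 2 : ℝ):ℂ) + ((t j * r j 1 / 2 : ℝ):ℂ) * Complex.I := by
      intro j _
      rw [blochState_neg_eq]
      simp only [Matrix.of_apply, Matrix.cons_val', Matrix.cons_val_zero, Matrix.empty_val',
        Matrix.cons_val_fin_one, Matrix.cons_val_one, Matrix.head_cons, Matrix.head_fin_const]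
      push_cast
      ring
    rw [Finset.sum_congr rfl hterm01, sum_ofReal_add_mul_I] at h01
    simp only [Matrix.one_apply, if_neg (by norm_num : ¬((0 : Fin 2) = 1)),
      Complex.ext_iff, Complex.add_re, Complex.ofReal_re, Complex.mul_re, Complex.I_re,
      Complex.I_im, Complex.ofReal_im, Complex.add_im, Complex.mul_im, Complex.zero_re,
      Complex.zero_im] at h01
    have c0 : ∑ j, t j * r j 0 = 0 := by
      have e : ∑ j, -(t j * r j 0) / 2 = -(∑ j, t j * r j 0) / 2 := by
        rw [← Finset.sum_div, ← Finset.sum_neg_distrib]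
      have := h01.1
      rw [e] at this
      linarith
    have c1 : ∑ j, t j * r j 1 = 0 := by
      have e : ∑ j, t j * r j 1 / 2 = (∑ j, t j * r j 1) / 2 := by
        rw [← Finset.sum_div]
      have := h01.2
      rw [e] at this
      linarith
    have h00 := hentry 0 0
    have hterm00 : ∀ j ∈ Finset.univ, ((t j : ℝ):ℂ) * blochState (-(r j)) 0 0
        = ((t j / 2 - t j * r j 2 / 2 : ℝ):ℂ) + ((0:ℝ):ℂ) * Complex.I := by
      intro j _
      rw [blochState_neg_eq]
      simp only [Matrix.of_apply, Matrix.cons_val', Matrix.cons_val_zero, Matrix.empty_val',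
        Matrix.cons_val_fin_one]
      push_cast
      ring
    rw [Finset.sum_congr rfl hterm00, sum_ofReal_add_mul_I] at h00
    simp only [Matrix.one_apply, if_pos rfl, Complex.ext_iff, Complex.add_re, Complex.ofReal_re,
      Complex.mul_re, Complex.I_re, Complex.I_im, Complex.ofReal_im, Complex.add_im,
      Complex.mul_im, Complex.one_re, Complex.one_im, mul_zero, zero_mul, mul_one, one_mul,
      sub_zero, zero_sub, add_zero, zero_add, neg_zero] at h00
    have h11 := hentry 1 1
    have hterm11 : ∀ j ∈ Finset.univ, ((t j : ℝ):ℂ) * blochState (-(r j)) 1 1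
        = ((t j / 2 + t j * r j 2 / 2 : ℝ):ℂ) + ((0:ℝ):ℂ) * Complex.I := by
      intro j _
      rw [blochState_neg_eq]
      simp only [Matrix.of_apply, Matrix.cons_val', Matrix.cons_val_zero, Matrix.empty_val',
        Matrix.cons_val_fin_one, Matrix.cons_val_one, Matrix.head_cons, Matrix.head_fin_const]
      push_cast
      ring
    rw [Finset.sum_congr rfl hterm11, sum_ofReal_add_mul_I] at h11
    simp only [Matrix.one_apply, if_pos rfl, Complex.ext_iff, Complex.add_re, Complex.ofReal_re,
      Complex.mul_re, Complex.I_re, Complex.I_im, Complex.ofReal_im, Complex.add_im,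
      Complex.mul_im, Complex.one_re, Complex.one_im, mul_zero, zero_mul, mul_one, one_mul,
      sub_zero, zero_sub, add_zero, zero_add, neg_zero] at h11
    have c2 : ∑ j, t j * r j 2 = 0 := by
      have e : ∑ j, t j * r j 2
          = ∑ j, ((t j / 2 + t j * r j 2 / 2) - (t j / 2 - t j * r j 2 / 2)) :=
        Finset.sum_congr rfl fun j _ => by ring
      rw [e, Finset.sum_sub_distrib, h11.1, h00.1]
      ring
    have g : ∀ i : Fin 3, ∑ j, (t j • r j) i = (0 : Fin 3 → ℝ) i := by
      intro i
      fin_cases i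
      · simpa [smul_eq_mul] using c0
      · simpa [smul_eq_mul] using c1
      · simpa [smul_eq_mul] using c2
    funext i
    rw [Finset.sum_apply]
    exact g i
  · rintro ⟨t, hpos, hzero⟩
    have hcomp : ∀ i, ∑ j, t j * r j i = 0 := by
      intro i
      have := congrFun hzero i
      simpa [Finset.sum_apply, Pi.smul_apply, smul_eq_mul] using this
    set s := ∑ j, t j with hs
    have hspos : 0 < s := Finset.sum_pos (fun j _ => hpos j) ⟨⟨0, by omega⟩, Finset.mem_univ _⟩
    have hsne : s ≠ 0 := ne_of_gt hspos
    set c : Fin n → ℝ := fun j => 2 * t j / s with hc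
    have hcpos : ∀ j, 0 < c j := fun j => div_pos (by linarith [hpos j]) hspos
    have hcsum : ∑ j, c j = 2 := by
      rw [hc]
      rw [← Finset.sum_div, ← Finset.mul_sum, ← hs]
      field_simp
    have hccomp : ∀ i, ∑ j, c j * r j i = 0 := by
      intro i
      rw [hc]
      have : ∀ j ∈ Finset.univ, 2 * t j / s * r j i = (2/s) * (t j * r j i) :=
        fun j _ => by ring
      rw [Finset.sum_congr rfl this, ← Finset.mul_sum, hcomp i, mul_zero]
    refine ⟨fun j => ((c j : ℝ):ℂ) • blochState (-(r j)), ⟨fun j =>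
      smul_psd _ (le_of_lt (hcpos j)) (bloch_psd _ (neg_unit (hunit j))), ?_⟩, fun j => ⟨?_, ?_⟩⟩
    · -- sums to identity
      have entry_simp : ∀ (j : Fin n) (a b : Fin 2),
          (((c j : ℝ):ℂ) • blochState (-(r j))) a b = ((c j : ℝ):ℂ) * blochState (-(r j)) a b :=
        fun j a b => rfl
      have E00 : ∑ j, (((c j : ℝ):ℂ) • blochState (-(r j))) 0 0
          = (1 : Matrix (Fin 2) (Fin 2) ℂ) 0 0 := by
        have h1 : ∀ j ∈ Finset.univ, (((c j : ℝ):ℂ) • blochState (-(r j))) 0 0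
            = ((c j / 2 - c j * r j 2 / 2 : ℝ):ℂ) + ((0 : ℝ):ℂ) * Complex.I := by
          intro j _
          rw [entry_simp, blochState_neg_eq]
          simp only [Matrix.of_apply, Matrix.cons_val', Matrix.cons_val_zero, Matrix.empty_val',
            Matrix.cons_val_fin_one]
          push_cast
          ring
        have d1 : ∑ j, c j / 2 = 1 := by rw [← Finset.sum_div, hcsum]; norm_num
        have d2 : ∑ j, c j * r j 2 / 2 = 0 := by rw [← Finset.sum_div, hccomp 2]; norm_num
        rw [Finset.sum_congr rfl h1, sum_ofReal_add_mul_I, Finset.sum_sub_distrib, d1, d2]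
        norm_num [Matrix.one_apply]
      have E01 : ∑ j, (((c j : ℝ):ℂ) • blochState (-(r j))) 0 1
          = (1 : Matrix (Fin 2) (Fin 2) ℂ) 0 1 := by
        have h1 : ∀ j ∈ Finset.univ, (((c j : ℝ):ℂ) • blochState (-(r j))) 0 1
            = ((-(c j * r j 0) / 2 : ℝ):ℂ) + ((c j * r j 1 / 2 : ℝ):ℂ) * Complex.I := by
          intro j _
          rw [entry_simp, blochState_neg_eq]
          simp only [Matrix.of_apply, Matrix.cons_val', Matrix.cons_val_zero, Matrix.empty_val',
            Matrix.cons_val_fin_one, Matrix.cons_val_one, Matrix.head_cons, Matrix.head_fin_const]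
          push_cast
          ring
        have e0 : ∑ j, -(c j * r j 0) / 2 = 0 := by
          have h2 : ∀ j ∈ Finset.univ, -(c j * r j 0) / 2 = (-(1:ℝ)/2) * (c j * r j 0) :=
            fun j _ => by ring
          rw [Finset.sum_congr rfl h2, ← Finset.mul_sum, hccomp 0, mul_zero]
        have e1 : ∑ j, c j * r j 1 / 2 = 0 := by
          rw [← Finset.sum_div, hccomp 1, zero_div]
        rw [Finset.sum_congr rfl h1, sum_ofReal_add_mul_I, e0, e1]
        norm_num [Matrix.one_apply]
      have E10 : ∑ j, (((c j : ℝ):ℂ) • blochState (-(r j))) 1 0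
          = (1 : Matrix (Fin 2) (Fin 2) ℂ) 1 0 := by
        have h1 : ∀ j ∈ Finset.univ, (((c j : ℝ):ℂ) • blochState (-(r j))) 1 0
            = ((-(c j * r j 0) / 2 : ℝ):ℂ) + ((-(c j * r j 1) / 2 : ℝ):ℂ) * Complex.I := by
          intro j _
          rw [entry_simp, blochState_neg_eq]
          simp only [Matrix.of_apply, Matrix.cons_val', Matrix.cons_val_zero, Matrix.empty_val',
            Matrix.cons_val_fin_one, Matrix.cons_val_one, Matrix.head_cons, Matrix.head_fin_const]
          push_cast
          ring
        have e0 : ∑ j, -(c j * r j 0) / 2 = 0 := by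
          have h2 : ∀ j ∈ Finset.univ, -(c j * r j 0) / 2 = (-(1:ℝ)/2) * (c j * r j 0) :=
            fun j _ => by ring
          rw [Finset.sum_congr rfl h2, ← Finset.mul_sum, hccomp 0, mul_zero]
        have e1 : ∑ j, -(c j * r j 1) / 2 = 0 := by
          have h2 : ∀ j ∈ Finset.univ, -(c j * r j 1) / 2 = (-(1:ℝ)/2) * (c j * r j 1) :=
            fun j _ => by ring
          rw [Finset.sum_congr rfl h2, ← Finset.mul_sum, hccomp 1, mul_zero]
        rw [Finset.sum_congr rfl h1, sum_ofReal_add_mul_I, e0, e1]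
        norm_num [Matrix.one_apply]
      have E11 : ∑ j, (((c j : ℝ):ℂ) • blochState (-(r j))) 1 1
          = (1 : Matrix (Fin 2) (Fin 2) ℂ) 1 1 := by
        have h1 : ∀ j ∈ Finset.univ, (((c j : ℝ):ℂ) • blochState (-(r j))) 1 1
            = ((c j / 2 + c j * r j 2 / 2 : ℝ):ℂ) + ((0 : ℝ):ℂ) * Complex.I := by
          intro j _
          rw [entry_simp, blochState_neg_eq]
          simp only [Matrix.of_apply, Matrix.cons_val', Matrix.cons_val_zero, Matrix.empty_val',
            Matrix.cons_val_fin_one, Matrix.cons_val_one, Matrix.head_cons, Matrix.head_fin_const]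
          push_cast
          ring
        have d1 : ∑ j, c j / 2 = 1 := by rw [← Finset.sum_div, hcsum]; norm_num
        have d2 : ∑ j, c j * r j 2 / 2 = 0 := by rw [← Finset.sum_div, hccomp 2]; norm_num
        rw [Finset.sum_congr rfl h1, sum_ofReal_add_mul_I, Finset.sum_add_distrib, d1, d2]
        norm_num [Matrix.one_apply]
      ext a b
      rw [Matrix.sum_apply]
      fin_cases a <;> fin_cases b
      · exact E00
      · exact E01
      · exact E10
      · exact E11
    · -- trace zero
      show (blochState (r j) * (((c j : ℝ):ℂ) • blochState (-(r j)))).trace = 0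
      rw [Matrix.mul_smul, Matrix.trace_smul, trace_bloch_mul]
      have : (1 + (r j 0 * (-(r j)) 0 + r j 1 * (-(r j)) 1 + r j 2 * (-(r j)) 2)) / 2 = 0 := by
        simp only [Pi.neg_apply]
        nlinarith [hunit j]
      rw [this]
      simp
    · -- sum of traces nonzero
      show ∑ k, ((blochState (r k)) * (((c j : ℝ):ℂ) • blochState (-(r j)))).trace ≠ 0
      have h1 : ∀ k ∈ Finset.univ,
          ((blochState (r k)) * (((c j : ℝ):ℂ) • blochState (-(r j)))).trace
          = ((c j * ((1 - (r k 0 * r j 0 + r k 1 * r j 1 + r k 2 * r j 2)) / 2) : ℝ):ℂ) := by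
        intro k _
        rw [Matrix.mul_smul, Matrix.trace_smul, trace_bloch_mul]
        simp only [Pi.neg_apply, smul_eq_mul]
        push_cast
        ring
      rw [Finset.sum_congr rfl h1, ← Complex.ofReal_sum]
      rw [Complex.ofReal_ne_zero]
      have hpos' : 0 < ∑ k, c j * ((1 - (r k 0 * r j 0 + r k 1 * r j 1 + r k 2 * r j 2)) / 2) := by
        obtain ⟨k, hk⟩ := Fintype.exists_ne_of_one_lt_card (by simp; omega) j
        refine Finset.sum_pos' (fun k _ => ?_) ⟨k, Finset.mem_univ _, ?_⟩
        · have h2 := dot_le_one (hunit k) (hunit j)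
          exact mul_nonneg (hcpos j).le (by linarith)
        · have hlt := dot_lt_one (hunit k) (hunit j) (fun h => hk (hinj h))
          exact mul_pos (hcpos j) (by linarith)
      exact ne_of_gt hpos'
end
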